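/- arXiv:2204.07758 — 2 statements merged into one kernel-verified Lean document; each statement's English description precedes it below -/
import Mathlib

section
/- Let k be a field of characteristic 2 and A = (a_{i,j}) the n×(n+1) matrix of indeterminates over k. Let X_j be the signed maximal minor with column j removed and let X_J = X_{j_1}⋯X_{j_s} for a vector J = (j_1,…,j_s) with s odd. Then for any row index r and any column indices i_1, i_2, the second partial derivative ∂_{a_{r,i_1}} ∂_{a_{r,i_2}} X_J = 0 in k[a_{i,j}]. -/
set_option linter.unusedSectionVars false
set_option linter.unreachableTactic false
set_option linter.unusedTactic false

open MvPolynomial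

/-- The generic `n × (n+1)` matrix of indeterminates `a_{i,j}` over `k`. -/
noncomputable def genMat (n : ℕ) (k : Type*) [CommRing k] :
    Matrix (Fin n) (Fin (n + 1)) (MvPolynomial (Fin n × Fin (n + 1)) k) :=
  fun i j => X (i, j)

/-- `Xdet n k j` is the signed maximal minor of the generic matrix with column `j` deleted. -/
noncomputable def Xdet (n : ℕ) (k : Type*) [CommRing k] (j : Fin (n + 1)) :
    MvPolynomial (Fin n × Fin (n + 1)) k :=
  (-1) ^ (j : ℕ) * ((genMat n k).submatrix id j.succAbove).det

section ProdRule

variable {k : Type*} [CommRing k] {τ : Type*} [DecidableEq τ]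

lemma pderiv_finset_prod {ι : Type*} [DecidableEq ι] (v : τ) (s : Finset ι)
    (g : ι → MvPolynomial τ k) :
    pderiv v (∏ i ∈ s, g i) = ∑ i ∈ s, pderiv v (g i) * ∏ j ∈ s.erase i, g j := by
  classical
  induction s using Finset.induction_on with
  | empty => simp
  | @insert a s ha ih =>
    rw [Finset.prod_insert ha, pderiv_mul, ih, Finset.sum_insert ha, Finset.erase_insert ha,
      Finset.mul_sum]
    congr 1
    refine Finset.sum_congr rfl fun i hi => ?_
    have hia : a ≠ i := fun h => ha (h ▸ hi)
    rw [Finset.erase_insert_of_ne hia,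
      Finset.prod_insert (fun h => ha (Finset.mem_of_mem_erase h))]
    ring

lemma pderiv_det {ι : Type*} [Fintype ι] [DecidableEq ι] (v : τ)
    (M : Matrix ι ι (MvPolynomial τ k)) :
    pderiv v M.det = ∑ t, (M.updateRow t fun q => pderiv v (M t q)).det := by
  simp only [Matrix.det_apply]
  rw [map_sum, Finset.sum_comm]
  refine Finset.sum_congr rfl fun σ _ => ?_
  rw [Units.smul_def, map_zsmul, pderiv_finset_prod, ← Finset.smul_sum]
  congr 1
  rw [← Equiv.sum_comp σ fun t => ∏ i, (M.updateRow t fun q => pderiv v (M t q)) (σ i) i]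
  refine Finset.sum_congr rfl fun i₀ _ => ?_
  rw [← Finset.mul_prod_erase Finset.univ _ (Finset.mem_univ i₀)]
  congr 1
  · rw [Matrix.updateRow_self]
  · refine Finset.prod_congr rfl fun i hi => ?_
    have : σ i ≠ σ i₀ := fun h => (Finset.mem_erase.mp hi).1 (σ.injective h)
    rw [Matrix.updateRow_ne this]

end ProdRule
section RLemmas

variable {n : ℕ} {k : Type*} [CommRing k]

local notation "Rp" => MvPolynomial (Fin n × Fin (n + 1)) k

lemma neg_one_pow_pderiv (v : Fin n × Fin (n + 1)) (m : ℕ) :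
    pderiv v ((-1 : Rp) ^ m) = 0 := by
  have : ((-1 : Rp) ^ m) = C ((-1) ^ m) := by
    rw [map_pow, map_neg, map_one]
  rw [this, pderiv_C]

lemma pderiv_Xdet (r : Fin n) (i j : Fin (n + 1)) :
    pderiv (r, i) (Xdet n k j) =
      (-1 : Rp) ^ (j : ℕ) *
        (((genMat n k).submatrix id j.succAbove).updateRow r
            fun q => if j.succAbove q = i then 1 else 0).det := by
  classical
  rw [Xdet, pderiv_mul, neg_one_pow_pderiv, zero_mul, zero_add, pderiv_det]
  congr 1
  rw [Finset.sum_eq_single r]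
  · congr 1
    funext q
    simp only [Matrix.submatrix_apply, id_eq, genMat, pderiv_X, Pi.single_apply, Prod.mk.injEq]
    by_cases h : j.succAbove q = i <;> simp [h]
  · intro t _ ht
    refine Matrix.det_eq_zero_of_row_eq_zero t fun q => ?_
    rw [Matrix.updateRow_self]
    simp only [Matrix.submatrix_apply, id_eq, genMat, pderiv_X, Pi.single_apply, Prod.mk.injEq]
    simp [ht]
  · intro h
    exact absurd (Finset.mem_univ r) h

lemma pderiv_pderiv_Xdet (r : Fin n) (p i j : Fin (n + 1)) :
    pderiv (r, p) (pderiv (r, i) (Xdet n k j)) = 0 := by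
  classical
  rw [pderiv_Xdet, pderiv_mul, neg_one_pow_pderiv, zero_mul, zero_add, pderiv_det]
  rw [Finset.sum_eq_zero, mul_zero]
  intro t _
  refine Matrix.det_eq_zero_of_row_eq_zero t fun q => ?_
  rw [Matrix.updateRow_self]
  rcases eq_or_ne t r with rfl | ht
  · rw [Matrix.updateRow_self]
    split_ifs
    · exact pderiv_one
    · exact map_zero _
  · rw [Matrix.updateRow_ne ht]
    simp only [Matrix.submatrix_apply, id_eq, genMat, pderiv_X, Pi.single_apply, Prod.mk.injEq]
    simp [ht]

lemma rowRel (t : Fin n) :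
    ∑ j, (X (t, j) : Rp) * Xdet n k j = 0 := by
  classical
  set B : Matrix (Fin (n + 1)) (Fin (n + 1)) Rp :=
    Matrix.of (Fin.cases (fun j => X (t, j)) (genMat n k)) with hB
  have hdet : B.det = 0 := by
    refine Matrix.det_zero_of_row_eq (Fin.succ_ne_zero t).symm ?_
    funext j
    rfl
  have hL := Matrix.det_succ_row_zero B
  rw [hdet] at hL
  have hsub : ∀ j : Fin (n + 1),
      B.submatrix Fin.succ j.succAbove = (genMat n k).submatrix id j.succAbove := by
    intro j
    ext q q'
    rfl
  calc ∑ j, (X (t, j) : Rp) * Xdet n k j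
      = ∑ j : Fin (n + 1), (-1 : Rp) ^ (j : ℕ) * B 0 j * (B.submatrix Fin.succ j.succAbove).det := by
        refine Finset.sum_congr rfl fun j _ => ?_
        rw [hsub j, Xdet]
        have : B 0 j = X (t, j) := rfl
        rw [this]
        ring
    _ = 0 := hL.symm

lemma orthRel (r : Fin n) (i : Fin (n + 1)) (t : Fin n) (ht : t ≠ r) :
    ∑ q, (X (t, q) : Rp) * pderiv (r, i) (Xdet n k q) = 0 := by
  classical
  have h := congrArg (pderiv (r, i)) (rowRel (n := n) (k := k) t)
  simp only [map_sum, pderiv_mul, map_zero] at h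
  rw [← h]
  refine (Finset.sum_congr rfl fun q _ => ?_).symm
  have : pderiv (r, i) (X (t, q) : Rp) = 0 := by
    refine pderiv_X_of_ne ?_
    simp [Prod.ext_iff, ht]
  rw [this, zero_mul, zero_add]

lemma eulerRel (r : Fin n) (i : Fin (n + 1)) :
    Xdet n k i + ∑ q, (X (r, q) : Rp) * pderiv (r, i) (Xdet n k q) = 0 := by
  classical
  have h := congrArg (pderiv (r, i)) (rowRel (n := n) (k := k) r)
  simp only [map_sum, pderiv_mul, map_zero] at h
  have hsplit : ∀ q : Fin (n + 1),
      pderiv (r, i) (X (r, q) : Rp) = if q = i then 1 else 0 := by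
    intro q
    rw [pderiv_X]
    simp [Pi.single_apply, Prod.ext_iff]
  rw [← h]
  rw [Finset.sum_add_distrib]
  congr 1
  rw [Finset.sum_congr rfl fun q _ => by rw [hsplit q]]
  simp [ite_mul]

lemma antiRel (r : Fin n) (i p : Fin (n + 1)) :
    pderiv (r, p) (Xdet n k i) + pderiv (r, i) (Xdet n k p) = 0 := by
  classical
  have h := congrArg (pderiv (r, p)) (eulerRel (n := n) (k := k) r i)
  simp only [map_add, map_sum, pderiv_mul, map_zero] at h
  rw [← h]
  congr 1
  have : ∀ q : Fin (n + 1),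
      pderiv (r, p) ((X (r, q) : Rp)) * pderiv (r, i) (Xdet n k q)
        + (X (r, q) : Rp) * pderiv (r, p) (pderiv (r, i) (Xdet n k q))
        = (if q = p then 1 else 0) * pderiv (r, i) (Xdet n k q) := by
    intro q
    rw [pderiv_pderiv_Xdet, mul_zero, add_zero, pderiv_X]
    congr 1
    simp [Pi.single_apply, Prod.ext_iff]
  rw [Finset.sum_congr rfl fun q _ => this q]
  simp [ite_mul]

end RLemmas
section LinAlg

lemma exists_two_span {K V : Type*} [Field K] [AddCommGroup V] [Module K V]
    [FiniteDimensional K V] (W : Submodule K V) (hW : Module.finrank K W ≤ 2) :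
    ∃ α β : V, ∀ w ∈ W, ∃ a b : K, w = a • α + b • β := by
  classical
  set d := Module.finrank K W with hd
  let bb : Module.Basis (Fin d) K W := Module.finBasis K W
  let G : Fin 2 → V := fun i => if h : (i : ℕ) < d then (bb ⟨i, h⟩ : V) else 0
  refine ⟨G 0, G 1, fun w hw => ?_⟩
  have hrepr : (⟨w, hw⟩ : W) = ∑ i : Fin d, bb.repr ⟨w, hw⟩ i • bb i :=
    (bb.sum_repr ⟨w, hw⟩).symm
  have hrepr' : w = ∑ i : Fin d, bb.repr ⟨w, hw⟩ i • (bb i : V) := by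
    have := congrArg (Submodule.subtype W) hrepr
    simpa only [map_sum, map_smul, Submodule.subtype_apply] using this
  set c : Fin d → K := fun i => bb.repr ⟨w, hw⟩ i with hc
  let c' : Fin 2 → K := fun i => if h : (i : ℕ) < d then c ⟨i, h⟩ else 0
  refine ⟨c' 0, c' 1, ?_⟩
  let emb : Fin d ↪ Fin 2 := ⟨Fin.castLE hW, Fin.castLE_injective hW⟩
  have key : ∑ i : Fin 2, c' i • G i = ∑ i : Fin d, c i • (bb i : V) := by
    calc ∑ i : Fin 2, c' i • G i
        = ∑ i ∈ Finset.univ.map emb, c' i • G i := by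
          refine (Finset.sum_subset (Finset.subset_univ _) ?_).symm
          intro j _ hj
          have hjd : ¬ ((j : ℕ) < d) := by
            intro h
            exact hj (Finset.mem_map.mpr ⟨⟨j, h⟩, Finset.mem_univ _, by
              simp [emb, Fin.ext_iff]⟩)
          simp [c', hjd]
      _ = ∑ i : Fin d, c' (emb i) • G (emb i) := Finset.sum_map _ _ _
      _ = ∑ i : Fin d, c i • (bb i : V) := by
          refine Finset.sum_congr rfl fun i _ => ?_
          have h1 : ((emb i : Fin 2) : ℕ) < d := by simp [emb, i.isLt]
          simp only [c', G, dif_pos h1]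
          congr 1 <;> congr 1 <;> exact Fin.ext (by simp [emb])
  rw [← hrepr'] at key
  rw [← key, Fin.sum_univ_two]

end LinAlg
section Alg

private def PP {K : Type*} [CommMonoid K] {s : ℕ} (x : Fin s → K) (a b : Fin s) : K :=
  ∏ t ∈ (Finset.univ.erase a).erase b, x t

private def DD (s : ℕ) : Finset ((_ : Fin s) × Fin s) :=
  Finset.univ.sigma fun a => Finset.univ.erase a

private lemma mem_DD {s : ℕ} (p : (_ : Fin s) × Fin s) : p ∈ DD s ↔ p.2 ≠ p.1 := by
  simp [DD, Finset.mem_sigma]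

private lemma PP_symm {K : Type*} [CommMonoid K] {s : ℕ} (x : Fin s → K) (a b : Fin s) :
    PP x a b = PP x b a := by
  unfold PP
  rw [Finset.erase_right_comm]

private lemma sum_swap_DD {K : Type*} [AddCommMonoid K] {s : ℕ} (g h : Fin s → Fin s → K)
    (hgh : ∀ a b, b ≠ a → g a b = h b a) :
    ∑ p ∈ DD s, g p.1 p.2 = ∑ p ∈ DD s, h p.1 p.2 := by
  refine Finset.sum_nbij' (fun p => ⟨p.2, p.1⟩) (fun p => ⟨p.2, p.1⟩) ?_ ?_ ?_ ?_ ?_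
  · intro p hp; rw [mem_DD] at hp ⊢; exact fun hh => hp hh.symm
  · intro p hp; rw [mem_DD] at hp ⊢; exact fun hh => hp hh.symm
  · intro p _; rfl
  · intro p _; rfl
  · intro p hp; exact hgh p.1 p.2 ((mem_DD p).1 hp)

variable {K : Type*} [Field K] [CharP K 2]

private lemma alg_vanish {s : ℕ} (hs : Odd s) (lam mu x : Fin s → K) (α₁ α₂ β₁ β₂ A B : K)
    (hx : ∀ a, x a = lam a * A + mu a * B) :
    (∑ a, ∑ b ∈ Finset.univ.erase a, (lam a * α₂ + mu a * β₂) *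
      ((lam b * α₁ + mu b * β₁) * PP x a b)) = 0 := by
  classical
  -- diagonal-symmetric sums vanish in characteristic two
  have hsym : ∀ F : Fin s → K, ∑ p ∈ DD s, F p.1 * F p.2 * PP x p.1 p.2 = 0 := by
    intro F
    refine Finset.sum_involution (fun p _ => ⟨p.2, p.1⟩) ?_ ?_ ?_ ?_
    · intro p hp
      have : F p.2 * F p.1 * PP x p.2 p.1 = F p.1 * F p.2 * PP x p.1 p.2 := by
        rw [PP_symm x p.2 p.1]; ring
      rw [this, CharTwo.add_self_eq_zero]
    · intro p hp _ h
      exact (mem_DD p).1 hp (congrArg Sigma.fst h)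
    · intro p hp
      rw [mem_DD] at hp ⊢
      exact fun h => hp h.symm
    · intro p hp
      rfl
  -- contraction with `x` annihilates any cross sum
  have hcontract : ∀ F : Fin s → K, ∑ p ∈ DD s, x p.1 * F p.2 * PP x p.1 p.2 = 0 := by
    intro F
    calc ∑ p ∈ DD s, x p.1 * F p.2 * PP x p.1 p.2
        = ∑ p ∈ DD s, F p.1 * (x p.2 * PP x p.1 p.2) :=
          sum_swap_DD (fun a b => x a * F b * PP x a b)
            (fun a b => F a * (x b * PP x a b))
            (fun a b hba => by
              show x a * F b * PP x a b = F b * (x a * PP x b a)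
              rw [PP_symm x b a]; ring)
      _ = ∑ a, ∑ b ∈ Finset.univ.erase a, F a * (x b * PP x a b) :=
          (Finset.sum_sigma Finset.univ (fun a => Finset.univ.erase a)
            (fun p => F p.1 * (x p.2 * PP x p.1 p.2)))
      _ = 0 := by
          refine Finset.sum_eq_zero fun a _ => ?_
          have hinner : ∀ b ∈ Finset.univ.erase a,
              F a * (x b * PP x a b) = F a * ∏ t ∈ Finset.univ.erase a, x t := by
            intro b hb
            unfold PP
            rw [Finset.mul_prod_erase _ _ hb]
          rw [Finset.sum_congr rfl hinner, Finset.sum_const,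
            Finset.card_erase_of_mem (Finset.mem_univ a), Finset.card_univ, Fintype.card_fin]
          obtain ⟨c, hc⟩ := hs
          rw [show s - 1 = c * 2 by omega, mul_smul, CharTwo.two_nsmul, smul_zero]
  have hmlswap : ∑ p ∈ DD s, mu p.1 * lam p.2 * PP x p.1 p.2
      = ∑ p ∈ DD s, lam p.1 * mu p.2 * PP x p.1 p.2 :=
    sum_swap_DD (fun a b => mu a * lam b * PP x a b)
      (fun a b => lam a * mu b * PP x a b)
      (fun a b hba => by
        show mu a * lam b * PP x a b = lam b * mu a * PP x b a
        rw [PP_symm x b a]; ring)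
  -- the cross sum vanishes
  have hcross : ∑ p ∈ DD s, lam p.1 * mu p.2 * PP x p.1 p.2 = 0 := by
    by_cases hAB : A = 0 ∧ B = 0
    · refine Finset.sum_eq_zero fun p hp => ?_
      have hx0 : ∀ t, x t = 0 := fun t => by
        rw [hx t, hAB.1, hAB.2, mul_zero, mul_zero, add_zero]
      have hne : p.2 ≠ p.1 := (mem_DD p).1 hp
      have hs1 : s ≠ 1 := by
        intro h1
        subst h1
        exact hne (Subsingleton.elim _ _)
      have hmem2 : p.2 ∈ Finset.univ.erase p.1 :=
        Finset.mem_erase.mpr ⟨hne, Finset.mem_univ _⟩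
      have hcard : ((Finset.univ.erase p.1).erase p.2).card = s - 2 := by
        rw [Finset.card_erase_of_mem hmem2, Finset.card_erase_of_mem (Finset.mem_univ p.1),
          Finset.card_univ, Fintype.card_fin]
        omega
      obtain ⟨c, hc⟩ := hs
      have hpos : 0 < ((Finset.univ.erase p.1).erase p.2).card := by omega
      obtain ⟨t₀, ht₀⟩ := Finset.card_pos.mp hpos
      have hPP : PP x p.1 p.2 = 0 := Finset.prod_eq_zero ht₀ (hx0 t₀)
      rw [hPP, mul_zero]
    · have hexp : ∀ F : Fin s → K, ∑ p ∈ DD s, x p.1 * F p.2 * PP x p.1 p.2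
          = A * (∑ p ∈ DD s, lam p.1 * F p.2 * PP x p.1 p.2)
            + B * (∑ p ∈ DD s, mu p.1 * F p.2 * PP x p.1 p.2) := by
        intro F
        rw [Finset.mul_sum, Finset.mul_sum, ← Finset.sum_add_distrib]
        refine Finset.sum_congr rfl fun p hp => ?_
        rw [hx p.1]; ring
      have h1 : A * (∑ p ∈ DD s, lam p.1 * mu p.2 * PP x p.1 p.2) = 0 := by
        have hc := hcontract mu
        rw [hexp mu, hsym mu, mul_zero, add_zero] at hc
        exact hc
      have h2 : B * (∑ p ∈ DD s, lam p.1 * mu p.2 * PP x p.1 p.2) = 0 := by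
        have hc := hcontract lam
        rw [hexp lam, hsym lam, mul_zero, zero_add, hmlswap] at hc
        exact hc
      rcases not_and_or.mp hAB with hA | hB
      · exact (mul_eq_zero.mp h1).resolve_left hA
      · exact (mul_eq_zero.mp h2).resolve_left hB
  have hml : ∑ p ∈ DD s, mu p.1 * lam p.2 * PP x p.1 p.2 = 0 := by rw [hmlswap, hcross]
  calc (∑ a, ∑ b ∈ Finset.univ.erase a, (lam a * α₂ + mu a * β₂) *
          ((lam b * α₁ + mu b * β₁) * PP x a b))
      = ∑ p ∈ DD s, (lam p.1 * α₂ + mu p.1 * β₂) *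
          ((lam p.2 * α₁ + mu p.2 * β₁) * PP x p.1 p.2) :=
        Finset.sum_sigma' Finset.univ (fun a => Finset.univ.erase a)
          (fun a b => (lam a * α₂ + mu a * β₂) * ((lam b * α₁ + mu b * β₁) * PP x a b))
    _ = ∑ p ∈ DD s, (α₂ * α₁ * (lam p.1 * lam p.2 * PP x p.1 p.2)
          + α₂ * β₁ * (lam p.1 * mu p.2 * PP x p.1 p.2)
          + β₂ * α₁ * (mu p.1 * lam p.2 * PP x p.1 p.2)
          + β₂ * β₁ * (mu p.1 * mu p.2 * PP x p.1 p.2)) :=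
        Finset.sum_congr rfl fun p _ => by ring
    _ = 0 := by
        rw [Finset.sum_add_distrib, Finset.sum_add_distrib, Finset.sum_add_distrib,
          ← Finset.mul_sum, ← Finset.mul_sum, ← Finset.mul_sum, ← Finset.mul_sum,
          hsym lam, hsym mu, hcross, hml, mul_zero, mul_zero, mul_zero, mul_zero,
          add_zero, add_zero, add_zero]

end Alg
section Key

variable {n : ℕ} {k : Type*} [Field k] [CharP k 2]

local notation "Rp" => MvPolynomial (Fin n × Fin (n + 1)) k

private lemma keyK {K : Type*} [Field K] [CharP K 2] (φ : Rp →+* K)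
    (hφ : Function.Injective φ) (r : Fin n) (i₁ i₂ : Fin (n + 1)) (s : ℕ) (hs : Odd s)
    (f : Fin s → Fin (n + 1)) :
    (∑ a : Fin s, ∑ b ∈ Finset.univ.erase a,
      φ (pderiv (r, i₂) (Xdet n k (f a))) * (φ (pderiv (r, i₁) (Xdet n k (f b))) *
        ∏ t ∈ (Finset.univ.erase a).erase b, φ (Xdet n k (f t)))) = 0 := by
  classical
  -- membership of the gradient rows in the kernel of the reduced generic matrix
  have hmemW : ∀ j : Fin (n + 1),
      (fun q => φ (pderiv (r, j) (Xdet n k q))) ∈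
        LinearMap.ker (Matrix.mulVecLin
          (fun (t : {t : Fin n // t ≠ r}) (q : Fin (n + 1)) => φ (X (t.1, q)))) := by
    intro j
    rw [LinearMap.mem_ker]
    funext t
    erw [Matrix.mulVecLin_apply]
    have hmv : (Matrix.mulVec (fun (t : {t : Fin n // t ≠ r}) (q : Fin (n + 1)) =>
        φ (X (t.1, q))) fun q => φ (pderiv (r, j) (Xdet n k q))) t
        = ∑ q, φ (X (t.1, q)) * φ (pderiv (r, j) (Xdet n k q)) := rfl
    rw [hmv]
    calc ∑ q, φ (X (t.1, q)) * φ (pderiv (r, j) (Xdet n k q))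
        = φ (∑ q, (X (t.1, q) : Rp) * pderiv (r, j) (Xdet n k q)) := by
          rw [map_sum]
          exact Finset.sum_congr rfl fun q _ => (map_mul φ _ _).symm
      _ = 0 := by rw [orthRel r j t.1 t.2, map_zero]
  -- the generic square submatrix has nonzero determinant
  have hdetS0 : (Matrix.det (fun (t u : {t : Fin n // t ≠ r}) =>
      (X (t.1, Fin.castSucc u.1) : Rp))) ≠ 0 := by
    intro h0
    have h1 := congrArg (eval (fun p : Fin n × Fin (n + 1) =>
      if p.2 = Fin.castSucc p.1 then (1 : k) else 0)) h0
    erw [map_zero, RingHom.map_det, RingHom.mapMatrix_apply] at h1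
    have h2 : (Matrix.map (fun (t u : {t : Fin n // t ≠ r}) =>
        (X (t.1, Fin.castSucc u.1) : Rp)) (eval (fun p : Fin n × Fin (n + 1) =>
          if p.2 = Fin.castSucc p.1 then (1 : k) else 0)))
        = (1 : Matrix {t : Fin n // t ≠ r} {t : Fin n // t ≠ r} k) := by
      ext t u
      show eval _ (X (t.1, Fin.castSucc u.1)) = _
      simp only [Matrix.map_apply, eval_X, Matrix.one_apply]
      by_cases h : t = u
      · subst h; simp
      · rw [if_neg h, if_neg]
        intro hc
        exact h (Subtype.ext (Fin.castSucc_inj.mp hc)).symm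
    rw [h2, Matrix.det_one] at h1
    exact one_ne_zero h1
  have hdetS : (Matrix.det (fun (t u : {t : Fin n // t ≠ r}) =>
      φ (X (t.1, Fin.castSucc u.1)))) ≠ 0 := by
    intro h0
    apply hdetS0
    apply hφ
    erw [map_zero, RingHom.map_det, RingHom.mapMatrix_apply]
    exact h0
  -- columns of the square submatrix are linearly independent
  have hcols : LinearIndependent K (fun (u : {t : Fin n // t ≠ r}) =>
      fun (t : {t : Fin n // t ≠ r}) => φ (X (t.1, Fin.castSucc u.1))) := by
    rw [Fintype.linearIndependent_iff]
    intro w hw u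
    set S : Matrix {t : Fin n // t ≠ r} {t : Fin n // t ≠ r} K :=
      fun t u => φ (X (t.1, Fin.castSucc u.1)) with hS
    have hmv : S.mulVec w = 0 := by
      funext t
      have h := congrFun hw t
      simpa [S, Matrix.mulVec, dotProduct, mul_comm] using h
    have hunit : IsUnit S.det := isUnit_iff_ne_zero.mpr hdetS
    have hw0 : w = 0 := by
      have h3 := congrArg (fun v => Matrix.mulVec S⁻¹ v) hmv
      simpa [Matrix.mulVec_mulVec, Matrix.nonsing_inv_mul S hunit] using h3
    exact congrFun hw0 u
  -- the kernel has dimension at most two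
  have hdim : Module.finrank K (LinearMap.ker (Matrix.mulVecLin
      (fun (t : {t : Fin n // t ≠ r}) (q : Fin (n + 1)) => φ (X (t.1, q))))) ≤ 2 := by
    set L := Matrix.mulVecLin
      (fun (t : {t : Fin n // t ≠ r}) (q : Fin (n + 1)) => φ (X (t.1, q))) with hL
    have hrange : ∀ u : {t : Fin n // t ≠ r},
        (fun t : {t : Fin n // t ≠ r} => φ (X (t.1, Fin.castSucc u.1))) ∈
          LinearMap.range L := by
      intro u
      refine ⟨Pi.single (Fin.castSucc u.1) 1, ?_⟩
      erw [hL, Matrix.mulVecLin_apply, Matrix.mulVec_single]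
      funext t
      erw [MulOpposite.op_one, one_smul]
      rfl
    have hind2 : LinearIndependent K (fun u : {t : Fin n // t ≠ r} =>
        (⟨_, hrange u⟩ : LinearMap.range L)) := by
      apply LinearIndependent.of_comp (LinearMap.range L).subtype
      exact hcols
    have hge := hind2.fintype_card_le_finrank
    have hcards : Fintype.card {t : Fin n // t ≠ r} = n - 1 := by
      have hcc := Fintype.card_subtype_compl (fun t : Fin n => t = r)
      rw [Fintype.card_subtype_eq, Fintype.card_fin] at hcc
      simpa using hcc
    have hrn := LinearMap.finrank_range_add_finrank_ker L
    have hpidim : Module.finrank K (Fin (n + 1) → K) = n + 1 := by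
      rw [Module.finrank_fintype_fun_eq_card, Fintype.card_fin]
    have hn : 0 < n := r.pos
    rw [hpidim] at hrn
    rw [hcards] at hge
    omega
  obtain ⟨α, β, hαβ⟩ := exists_two_span _ hdim
  choose lam mu hlam using fun j : Fin (n + 1) => hαβ _ (hmemW j)
  have hy : ∀ j q₀, φ (pderiv (r, j) (Xdet n k q₀)) = lam j * α q₀ + mu j * β q₀ := by
    intro j q₀
    have h := congrFun (hlam j) q₀
    simpa using h
  -- symmetry of the gradient matrix in characteristic two
  have hsymφ : ∀ i j : Fin (n + 1),
      φ (pderiv (r, i) (Xdet n k j)) = φ (pderiv (r, j) (Xdet n k i)) := by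
    intro i j
    have h := congrArg φ (antiRel (n := n) (k := k) r j i)
    rw [map_add, map_zero] at h
    have h2 := eq_neg_of_add_eq_zero_left h
    rw [CharTwo.neg_eq] at h2
    exact h2
  -- decomposition of the maximal minors along row r
  have hxd : ∀ i : Fin (n + 1), φ (Xdet n k i)
      = lam i * (∑ q, φ (X (r, q)) * α q) + mu i * (∑ q, φ (X (r, q)) * β q) := by
    intro i
    have h := congrArg φ (eulerRel (n := n) (k := k) r i)
    rw [map_add, map_zero, map_sum] at h
    have h2 : (∑ q, φ ((X (r, q) : Rp) * pderiv (r, i) (Xdet n k q)))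
        = lam i * (∑ q, φ (X (r, q)) * α q) + mu i * (∑ q, φ (X (r, q)) * β q) := by
      rw [Finset.mul_sum, Finset.mul_sum, ← Finset.sum_add_distrib]
      refine Finset.sum_congr rfl fun q _ => ?_
      rw [map_mul, hy i q]; ring
    rw [h2] at h
    have h3 := eq_neg_of_add_eq_zero_left h
    rw [CharTwo.neg_eq] at h3
    exact h3
  -- final rewriting and application of the combinatorial lemma
  have hterm : ∀ a b : Fin s,
      φ (pderiv (r, i₂) (Xdet n k (f a))) * (φ (pderiv (r, i₁) (Xdet n k (f b))) *
        ∏ t ∈ (Finset.univ.erase a).erase b, φ (Xdet n k (f t)))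
      = (lam (f a) * α i₂ + mu (f a) * β i₂) * ((lam (f b) * α i₁ + mu (f b) * β i₁) *
          PP (fun t => φ (Xdet n k (f t))) a b) := by
    intro a b
    rw [hsymφ i₂ (f a), hsymφ i₁ (f b), hy (f a) i₂, hy (f b) i₁]
    rfl
  calc ∑ a : Fin s, ∑ b ∈ Finset.univ.erase a,
        φ (pderiv (r, i₂) (Xdet n k (f a))) * (φ (pderiv (r, i₁) (Xdet n k (f b))) *
          ∏ t ∈ (Finset.univ.erase a).erase b, φ (Xdet n k (f t)))
      = ∑ a : Fin s, ∑ b ∈ Finset.univ.erase a,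
          (lam (f a) * α i₂ + mu (f a) * β i₂) * ((lam (f b) * α i₁ + mu (f b) * β i₁) *
            PP (fun t => φ (Xdet n k (f t))) a b) :=
        Finset.sum_congr rfl fun a _ => Finset.sum_congr rfl fun b _ => hterm a b
    _ = 0 := alg_vanish hs (fun a => lam (f a)) (fun a => mu (f a))
        (fun t => φ (Xdet n k (f t))) (α i₁) (α i₂) (β i₁) (β i₂)
        (∑ q, φ (X (r, q)) * α q) (∑ q, φ (X (r, q)) * β q)
        (fun a => hxd (f a))

set_option maxHeartbeats 1000000 in
private lemma key (r : Fin n) (i₁ i₂ : Fin (n + 1)) (s : ℕ) (hs : Odd s)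
    (f : Fin s → Fin (n + 1)) :
    pderiv (r, i₁) (pderiv (r, i₂) (∏ a, Xdet n k (f a))) = 0 := by
  classical
  have expand : pderiv (r, i₁) (pderiv (r, i₂) (∏ a, Xdet n k (f a)))
      = ∑ a, ∑ b ∈ Finset.univ.erase a,
          pderiv (r, i₂) (Xdet n k (f a)) * (pderiv (r, i₁) (Xdet n k (f b)) *
            ∏ t ∈ (Finset.univ.erase a).erase b, Xdet n k (f t)) := by
    rw [pderiv_finset_prod, map_sum]
    refine Finset.sum_congr rfl fun a _ => ?_
    rw [pderiv_mul, pderiv_pderiv_Xdet, zero_mul, zero_add, pderiv_finset_prod,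
      Finset.mul_sum]
  rw [expand]
  have hφ : Function.Injective (algebraMap Rp (FractionRing Rp)) :=
    IsFractionRing.injective Rp (FractionRing Rp)
  haveI : CharP (FractionRing Rp) 2 := charP_of_injective_ringHom hφ 2
  apply hφ
  rw [map_zero, map_sum]
  calc ∑ a : Fin s, (algebraMap Rp (FractionRing Rp)) (∑ b ∈ Finset.univ.erase a,
        pderiv (r, i₂) (Xdet n k (f a)) * (pderiv (r, i₁) (Xdet n k (f b)) *
          ∏ t ∈ (Finset.univ.erase a).erase b, Xdet n k (f t)))
      = ∑ a : Fin s, ∑ b ∈ Finset.univ.erase a,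
          (algebraMap Rp (FractionRing Rp)) (pderiv (r, i₂) (Xdet n k (f a))) *
            ((algebraMap Rp (FractionRing Rp)) (pderiv (r, i₁) (Xdet n k (f b))) *
              ∏ t ∈ (Finset.univ.erase a).erase b,
                (algebraMap Rp (FractionRing Rp)) (Xdet n k (f t))) := by
        refine Finset.sum_congr rfl fun a _ => ?_
        rw [map_sum]
        refine Finset.sum_congr rfl fun b _ => ?_
        rw [map_mul, map_mul, map_prod]
    _ = 0 := keyK (algebraMap Rp (FractionRing Rp)) hφ r i₁ i₂ s hs f

end Key
/-- let `k` be a field of characteristic `2` and `X_J = X_{j_1} ⋯ X_{j_s}` a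
product of an odd number of maximal minors of the generic `n × (n+1)` matrix.  Then any two
formal partial derivatives taken in the same row `r` annihilate `X_J`:
`∂_{a_{r,i₁}} ∂_{a_{r,i₂}} X_J = 0`. -/
theorem stmt_8 (n : ℕ) (k : Type*) [Field k] [CharP k 2]
    (J : Multiset (Fin (n + 1))) (hJ : Odd (Multiset.card J))
    (r : Fin n) (i₁ i₂ : Fin (n + 1)) :
    pderiv (r, i₁) (pderiv (r, i₂) ((J.map (Xdet n k)).prod)) = 0 := by
  obtain ⟨L, rfl⟩ := Quotient.exists_rep J
  have hcast : (Quotient.mk _ L : Multiset (Fin (n + 1))) = (L : Multiset (Fin (n + 1))) := rfl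
  rw [hcast] at hJ ⊢
  have hlen : Odd L.length := by simpa using hJ
  have hprod : (Multiset.map (Xdet n k) (L : Multiset (Fin (n + 1)))).prod
      = ∏ i : Fin L.length, Xdet n k (L.get i) := by
    rw [Multiset.map_coe, Multiset.prod_coe]
    conv_lhs => rw [← List.ofFn_get L]
    rw [List.map_ofFn, List.prod_ofFn]
    rfl
  rw [hprod]
  exact key r i₁ i₂ L.length hlen L.get
end

section
/- Let Δ be a pseudo-manifold of dimension n−1 over a field K of characteristic 2 and suppose the Papadakis–Petrotou identity holds: for all integer vectors I (with n components) and J, ∂_I W_Δ(x_J) = (W_Δ(√(x_I x_J)))² if the monomial x_I x_J is a square, and 0 otherwise. Then for any h ∈ K[x_1,…,x_N]_m and vectors I, J with n and n−2m components respectively: ∂_I W_Δ(h² x_J) = (W_Δ(h √(x_I x_J)))² if x_I x_J is a square, and 0 otherwise. -/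
open MvPolynomial

/-- The monomial `x_J` indexed by a multiset of variable indices. -/
noncomputable def xMon {K : Type*} [Field K] {N : ℕ} (J : Multiset (Fin N)) :
    MvPolynomial (Fin N) K :=
  (J.map X).prod

/-- The iterated derivative `∂_I = ∂_{a_{1,i_1}} ⋯ ∂_{a_{n,i_n}}` acting on the coefficient
field `K`, built from a family `D r j = ∂_{a_{r,j}}` of derivations of `K`. -/
noncomputable def derivI {K : Type*} [Field K] {n N : ℕ}
    (D : Fin n → Fin N → Derivation ℤ K K) (I : Fin n → Fin N) (f : K) : K :=
  (List.ofFn fun r : Fin n => (D r (I r) : K →ₗ[ℤ] K)).foldr (fun φ x => φ x) f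

lemma xMon_add {K : Type*} [Field K] {N : ℕ} (A B : Multiset (Fin N)) :
    (xMon (A + B) : MvPolynomial (Fin N) K) = xMon A * xMon B := by
  simp [xMon, Multiset.map_add]

lemma xMon_toMultiset {K : Type*} [Field K] {N : ℕ} (d : Fin N →₀ ℕ) :
    (xMon d.toMultiset : MvPolynomial (Fin N) K) = monomial d 1 := by
  induction d using Finsupp.induction with
  | zero => simp [xMon]
  | single_add a n f ha hn ih =>
      rw [Finsupp.toMultiset_add, xMon_add, ih, Finsupp.toMultiset_single]
      rw [← one_mul (1 : K), ← monomial_mul, ← X_pow_eq_monomial]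
      simp [xMon, Multiset.map_nsmul, Multiset.prod_nsmul]

section derivFacts
variable {K : Type*} [Field K]

noncomputable def foldD (l : List (Derivation ℤ K K)) (f : K) : K :=
  l.foldr (fun δ x => δ x) f

lemma foldD_ofFn {n : ℕ} (g : Fin n → Derivation ℤ K K) (f : K) :
    (List.ofFn fun r => (g r : K →ₗ[ℤ] K)).foldr (fun φ x => φ x) f = foldD (List.ofFn g) f := by
  induction n with
  | zero => simp [foldD]
  | succ k ih =>
      rw [List.ofFn_succ, List.ofFn_succ, foldD, List.foldr_cons, List.foldr_cons]
      rw [← foldD, ← ih]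
      rfl

lemma derivI_eq_foldD {n N : ℕ}
    (D : Fin n → Fin N → Derivation ℤ K K) (I : Fin n → Fin N) (f : K) :
    derivI D I f = foldD (List.ofFn fun r => D r (I r)) f :=
  foldD_ofFn _ f

lemma foldD_zero (l : List (Derivation ℤ K K)) : foldD l 0 = 0 := by
  induction l with
  | nil => rfl
  | cons δ l ih => rw [foldD, List.foldr_cons, ← foldD, ih]; simp

lemma foldD_add (l : List (Derivation ℤ K K)) (a b : K) :
    foldD l (a + b) = foldD l a + foldD l b := by
  induction l with
  | nil => rfl
  | cons δ l ih => rw [foldD, List.foldr_cons, ← foldD, ih]; simp [foldD]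

lemma foldD_sq [CharP K 2] (l : List (Derivation ℤ K K)) (a c : K) :
    foldD l (a ^ 2 * c) = a ^ 2 * foldD l c := by
  induction l with
  | nil => rfl
  | cons δ l ih =>
      rw [foldD, List.foldr_cons, ← foldD, ih, Derivation.leibniz]
      have h2 : δ (a ^ 2) = 0 := by
        rw [Derivation.leibniz_pow]
        simp [CharTwo.two_eq_zero]
      rw [h2]
      simp [smul_eq_mul, foldD]

lemma derivI_sum {n N : ℕ} {ι : Type*}
    (D : Fin n → Fin N → Derivation ℤ K K) (I : Fin n → Fin N)
    (s : Finset ι) (f : ι → K) :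
    derivI D I (∑ i ∈ s, f i) = ∑ i ∈ s, derivI D I (f i) := by
  classical
  induction s using Finset.induction with
  | empty => simp [derivI_eq_foldD, foldD_zero]
  | insert _ _ hi ih =>
      rw [Finset.sum_insert hi, Finset.sum_insert hi, ← ih,
        derivI_eq_foldD, derivI_eq_foldD, derivI_eq_foldD, foldD_add]

lemma derivI_sq_mul [CharP K 2] {n N : ℕ}
    (D : Fin n → Fin N → Derivation ℤ K K) (I : Fin n → Fin N) (a c : K) :
    derivI D I (a ^ 2 * c) = a ^ 2 * derivI D I c := by
  rw [derivI_eq_foldD, derivI_eq_foldD, foldD_sq]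

end derivFacts


/-- let `K` have characteristic 2, `W : K[x₁,…,x_N]_n → K` the mixed volume
(a `K`-linear functional), and suppose the Papadakis–Petrotou identity holds:
`∂_I W(x_J) = (W(√(x_I x_J)))²` when `x_I x_J` is a square and `0` otherwise.  Then for any
homogeneous `h` of degree `m` and `I, J` with `n` and `n − 2m` components,
`∂_I W(h² x_J) = (W(h·√(x_I x_J)))²` when `x_I x_J` is a square, and `0` otherwise. -/
theorem stmt_10 (K : Type*) [Field K] [CharP K 2] (n N m : ℕ) (hm : 2 * m ≤ n)
    (D : Fin n → Fin N → Derivation ℤ K K)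
    (W : MvPolynomial (Fin N) K →ₗ[K] K)
    (hPP1 : ∀ (I : Fin n → Fin N) (J L : Multiset (Fin N)),
      (List.ofFn I : Multiset (Fin N)) + J = L + L →
      derivI D I (W (xMon J)) = (W (xMon L)) ^ 2)
    (hPP2 : ∀ (I : Fin n → Fin N) (J : Multiset (Fin N)),
      (¬ ∃ L : Multiset (Fin N), (List.ofFn I : Multiset (Fin N)) + J = L + L) →
      derivI D I (W (xMon J)) = 0)
    (h : MvPolynomial (Fin N) K) (hh : h.IsHomogeneous m)
    (I : Fin n → Fin N) (J : Multiset (Fin N)) (hJ : Multiset.card J = n - 2 * m) :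
    (∀ L : Multiset (Fin N), (List.ofFn I : Multiset (Fin N)) + J = L + L →
      derivI D I (W (h ^ 2 * xMon J)) = (W (h * xMon L)) ^ 2) ∧
    ((¬ ∃ L : Multiset (Fin N), (List.ofFn I : Multiset (Fin N)) + J = L + L) →
      derivI D I (W (h ^ 2 * xMon J)) = 0) := by
  classical
  haveI hexp : ExpChar (MvPolynomial (Fin N) K) 2 := ExpChar.prime Nat.prime_two
  haveI hexpK : ExpChar K 2 := ExpChar.prime Nat.prime_two
  -- expansion of h^2 as a sum of squares of monomials
  have hsq : h ^ 2 = ∑ d ∈ h.support, (coeff d h ^ 2) •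
      (xMon d.toMultiset * xMon d.toMultiset : MvPolynomial (Fin N) K) := by
    conv_lhs => rw [← support_sum_monomial_coeff h]
    rw [sum_pow_char]
    refine Finset.sum_congr rfl fun d _ => ?_
    rw [xMon_toMultiset, sq, monomial_mul, monomial_mul, smul_monomial, smul_eq_mul, mul_one, sq]
    rw [mul_one]
  have key : W (h ^ 2 * xMon J) = ∑ d ∈ h.support,
      (coeff d h) ^ 2 * W (xMon (d.toMultiset + d.toMultiset + J)) := by
    rw [hsq, Finset.sum_mul, map_sum]
    refine Finset.sum_congr rfl fun d _ => ?_
    rw [smul_mul_assoc, map_smul, smul_eq_mul, xMon_add, xMon_add]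
  constructor
  · intro L hIJ
    rw [key, derivI_sum]
    have step : ∀ d ∈ h.support,
        derivI D I (coeff d h ^ 2 * W (xMon (d.toMultiset + d.toMultiset + J)))
        = (coeff d h * W (xMon d.toMultiset * xMon L)) ^ 2 := by
      intro d _
      rw [derivI_sq_mul]
      have heq : (List.ofFn I : Multiset (Fin N)) + (d.toMultiset + d.toMultiset + J)
          = (d.toMultiset + L) + (d.toMultiset + L) := by
        have e1 : (d.toMultiset + L) + (d.toMultiset + L)
            = d.toMultiset + d.toMultiset + (L + L) := by abel
        rw [e1, ← hIJ]
        abel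
      rw [hPP1 I _ _ heq, xMon_add, mul_pow]
    rw [Finset.sum_congr rfl step, ← sum_pow_char]
    congr 1
    conv_rhs => rw [← support_sum_monomial_coeff h]
    rw [Finset.sum_mul, map_sum]
    refine Finset.sum_congr rfl fun d _ => ?_
    rw [xMon_toMultiset,
      show (monomial d (coeff d h) : MvPolynomial (Fin N) K)
        = coeff d h • (monomial d 1 : MvPolynomial (Fin N) K) by
          rw [smul_monomial, smul_eq_mul, mul_one],
      smul_mul_assoc, map_smul, smul_eq_mul]
  · intro hne
    rw [key, derivI_sum]
    refine Finset.sum_eq_zero fun d _ => ?_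
    rw [derivI_sq_mul, hPP2 I _ ?_, mul_zero]
    rintro ⟨M, hM⟩
    apply hne
    have hle : d.toMultiset ≤ M := by
      rw [Multiset.le_iff_count]
      intro a
      have hc := congrArg (Multiset.count a) hM
      simp only [Multiset.count_add] at hc
      omega
    refine ⟨M - d.toMultiset, ?_⟩
    set L := M - d.toMultiset with hL
    have hM' : M = d.toMultiset + L := by
      rw [hL, add_comm, tsub_add_cancel_of_le hle]
    rw [hM'] at hM
    have h1 : (List.ofFn I : Multiset (Fin N)) + J + (d.toMultiset + d.toMultiset)
        = L + L + (d.toMultiset + d.toMultiset) :=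
      calc (List.ofFn I : Multiset (Fin N)) + J + (d.toMultiset + d.toMultiset)
          = (List.ofFn I : Multiset (Fin N)) + (d.toMultiset + d.toMultiset + J) := by abel
        _ = (d.toMultiset + L) + (d.toMultiset + L) := hM
        _ = L + L + (d.toMultiset + d.toMultiset) := by abel
    exact add_right_cancel h1
end
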